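/- Let a, b ∈ ℤ with a ≠ 0 and b < 0. The quadratic form Q(x₁,x₂,x₃) = (a² − 2b)(x₁² + x₂² + x₃²) + 2b(x₁x₂ + x₁x₃ + x₂x₃) satisfies Q(x) ≥ a² − 2b for all nonzero x ∈ ℤ³ if and only if a² ≥ −b. -/
import Mathlib


theorem stmt_10 (a b : ℤ) (ha : a ≠ 0) (hb : b < 0) :
    (∀ x₁ x₂ x₃ : ℤ, ¬(x₁ = 0 ∧ x₂ = 0 ∧ x₃ = 0) →
        (a ^ 2 - 2 * b) * (x₁ ^ 2 + x₂ ^ 2 + x₃ ^ 2) +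
            2 * b * (x₁ * x₂ + x₁ * x₃ + x₂ * x₃) ≥ a ^ 2 - 2 * b) ↔
      a ^ 2 ≥ -b := by
  constructor
  · intro h
    have := h 1 1 1 (by simp)
    linarith
  · intro h x₁ x₂ x₃ hx
    have hsq : ∀ y : ℤ, y ≠ 0 → 1 ≤ y ^ 2 := by
      intro y hy
      have h1 := Int.one_le_abs hy
      nlinarith [sq_abs y]
    have hn : 1 ≤ x₁ ^ 2 + x₂ ^ 2 + x₃ ^ 2 := by
      have hor : x₁ ≠ 0 ∨ x₂ ≠ 0 ∨ x₃ ≠ 0 := by tauto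
      rcases hor with h1 | h2 | h3
      · nlinarith [hsq x₁ h1, sq_nonneg x₂, sq_nonneg x₃]
      · nlinarith [hsq x₂ h2, sq_nonneg x₁, sq_nonneg x₃]
      · nlinarith [hsq x₃ h3, sq_nonneg x₁, sq_nonneg x₂]
    by_cases heq : x₁ = x₂ ∧ x₂ = x₃
    · obtain ⟨e1, e2⟩ := heq
      subst e1; subst e2
      have h1 : x₁ ≠ 0 := by tauto
      have ht := hsq x₁ h1
      nlinarith [sq_nonneg a, mul_nonneg (sq_nonneg a) (by linarith : (0:ℤ) ≤ x₁ ^ 2 - 1)]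
    · have hS : 1 ≤ x₁ ^ 2 + x₂ ^ 2 + x₃ ^ 2 - (x₁ * x₂ + x₁ * x₃ + x₂ * x₃) := by
        have hor : x₁ ≠ x₂ ∨ x₂ ≠ x₃ := by tauto
      -- 2S = (x₁-x₂)² + (x₁-x₃)² + (x₂-x₃)² ≥ 1, and S is an integer
        have h2S : 1 ≤ (x₁ - x₂) ^ 2 + (x₁ - x₃) ^ 2 + (x₂ - x₃) ^ 2 := by
          rcases hor with h12 | h23
          · nlinarith [hsq (x₁ - x₂) (sub_ne_zero.mpr h12), sq_nonneg (x₁ - x₃), sq_nonneg (x₂ - x₃)]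
          · nlinarith [hsq (x₂ - x₃) (sub_ne_zero.mpr h23), sq_nonneg (x₁ - x₂), sq_nonneg (x₁ - x₃)]
        have key : (x₁ - x₂) ^ 2 + (x₁ - x₃) ^ 2 + (x₂ - x₃) ^ 2 =
            2 * (x₁ ^ 2 + x₂ ^ 2 + x₃ ^ 2 - (x₁ * x₂ + x₁ * x₃ + x₂ * x₃)) := by ring
        rw [key] at h2S
        omega
      nlinarith [mul_nonneg (sq_nonneg a) (by linarith : (0:ℤ) ≤ x₁ ^ 2 + x₂ ^ 2 + x₃ ^ 2 - 1),
        mul_nonneg (by linarith : (0:ℤ) ≤ -2 * b)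
          (by linarith : (0:ℤ) ≤ x₁ ^ 2 + x₂ ^ 2 + x₃ ^ 2 - (x₁ * x₂ + x₁ * x₃ + x₂ * x₃) - 1)]
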